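/- Let F : 𝔽₂^{n₁} × 𝔽₂^{n₂} → 𝔽₂^{n₂+n₁} be a decomposable Boolean network, F(x,y) = (F₁(x), H(x,y)). Suppose F₁ has a unique attractor, which is a steady state {c} (so F₁(c) = c and every attractor of F₁ equals {c}), and suppose the downstream Boolean network F₂^c : y ↦ H(c,y) has a unique attractor C₂ = {d₁, …, d_r} (an attractor of length r, so F₂^c(d_i) = d_{i+1} with indices mod r). Then F has a unique attractor, namely the length-r attractor {(c,d₁), …, (c,d_r)}, with F(c,d_i) = (c,d_{i+1}) for all i (indices mod r). -/

import Mathlib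

/-- An attractor of a Boolean network `F : α → α` is a minimal nonempty subset `C`
with `F(C) = C`. -/
def IsAttractor {α : Type*} (F : α → α) (C : Set α) : Prop :=
  C.Nonempty ∧ F '' C = C ∧ ∀ D ⊆ C, D.Nonempty → F '' D = D → D = C

/-- Any nonempty invariant set of a map on a finite type contains an attractor. -/
lemma exists_attractor_subset {α : Type*} [Finite α] (F : α → α) (S : Set α)
    (hS : S.Nonempty) (hinv : F '' S = S) : ∃ C, C ⊆ S ∧ IsAttractor F C := by
  obtain ⟨n, hn⟩ : ∃ n, S.ncard = n := ⟨_, rfl⟩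
  induction n using Nat.strong_induction_on generalizing S with
  | _ n ih =>
    by_cases hmin : ∀ D ⊆ S, D.Nonempty → F '' D = D → D = S
    · exact ⟨S, subset_rfl, hS, hinv, hmin⟩
    · push_neg at hmin
      obtain ⟨D, hDS, hDne, hDinv, hDneq⟩ := hmin
      subst hn
      obtain ⟨C, hCD, hC⟩ := ih D.ncard
        (Set.ncard_lt_ncard (hDS.ssubset_of_ne hDneq) (Set.toFinite S)) D hDne hDinv rfl
      exact ⟨C, hCD.trans hDS, hC⟩

/-- On a finite invariant set, every point is periodic with positive period. -/
lemma exists_pos_iterate_eq {α : Type*} [Finite α] (F : α → α) (C : Set α)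
    (hinv : F '' C = C) (x : α) (hx : x ∈ C) : ∃ m, 0 < m ∧ F^[m] x = x := by
  have hmaps : Set.MapsTo F C C := fun a ha => hinv ▸ Set.mem_image_of_mem F ha
  have hsurj : Set.SurjOn F C C := hinv.symm.subset
  have hbij : Set.BijOn F C C :=
    ((Set.toFinite C).surjOn_iff_bijOn_of_mapsTo hmaps).mp hsurj
  obtain ⟨a, b, hab, heq⟩ := Finite.exists_ne_map_eq_of_infinite
    (fun k : ℕ => (⟨F^[k] x, hmaps.iterate k hx⟩ : C))
  have heq' : F^[a] x = F^[b] x := congrArg Subtype.val heq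
  rcases hab.lt_or_gt with h | h
  · refine ⟨b - a, Nat.sub_pos_of_lt h, ?_⟩
    have : F^[a] (F^[b-a] x) = F^[a] x := by
      rw [← Function.iterate_add_apply, Nat.add_sub_cancel' h.le, heq']
    exact (hbij.injOn.iterate hmaps a) (hmaps.iterate _ hx) hx this
  · refine ⟨a - b, Nat.sub_pos_of_lt h, ?_⟩
    have : F^[b] (F^[a-b] x) = F^[b] x := by
      rw [← Function.iterate_add_apply, Nat.add_sub_cancel' h.le, heq'.symm]
    exact (hbij.injOn.iterate hmaps b) (hmaps.iterate _ hx) hx this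

/-- If the upstream module `F₁` of a decomposable Boolean network
`F(x,y) = (F₁ x, H x y)` has a unique attractor which is a steady state `{c}`, and the
downstream network `F₂^c = H c ·` has a unique attractor, a cycle `{d₁, …, d_r}` of
length `r`, then `F` has a unique attractor, namely the length-`r` attractor
`{(c,d₁), …, (c,d_r)}`, with `F (c, dᵢ) = (c, dᵢ₊₁)` (indices mod `r`). -/
theorem stmt_0 (n₁ n₂ r : ℕ) (hr : 0 < r)
    (F₁ : (Fin n₁ → ZMod 2) → (Fin n₁ → ZMod 2))
    (H : (Fin n₁ → ZMod 2) → (Fin n₂ → ZMod 2) → (Fin n₂ → ZMod 2))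
    (F : (Fin n₁ → ZMod 2) × (Fin n₂ → ZMod 2) → (Fin n₁ → ZMod 2) × (Fin n₂ → ZMod 2))
    (hF : ∀ x y, F (x, y) = (F₁ x, H x y))
    (c : Fin n₁ → ZMod 2) (hc : F₁ c = c)
    (hc_att : IsAttractor F₁ {c})
    (hc_uniq : ∀ C, IsAttractor F₁ C → C = {c})
    (d : ZMod r → (Fin n₂ → ZMod 2))
    (hd_inj : Function.Injective d)
    (hd_step : ∀ i : ZMod r, H c (d i) = d (i + 1))
    (hd_att : IsAttractor (fun y => H c y) (Set.range d))
    (hd_uniq : ∀ C, IsAttractor (fun y => H c y) C → C = Set.range d) :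
    (∀ i : ZMod r, F (c, d i) = (c, d (i + 1))) ∧
    IsAttractor F (Set.range fun i : ZMod r => (c, d i)) ∧
    ∀ C, IsAttractor F C → C = Set.range fun i : ZMod r => (c, d i) := by
  have : NeZero r := ⟨hr.ne'⟩
  have hstep : ∀ i : ZMod r, F (c, d i) = (c, d (i + 1)) := by
    intro i; rw [hF, hc, hd_step]
  set A : Set ((Fin n₁ → ZMod 2) × (Fin n₂ → ZMod 2)) :=
    Set.range fun i : ZMod r => (c, d i) with hA
  -- A as the image of range d under Prod.mk c
  have hA' : A = Prod.mk c '' Set.range d := by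
    rw [hA, ← Set.range_comp]; rfl
  -- key: a subset of "first coordinate c" sets, correspondence lemma
  have key : ∀ D : Set ((Fin n₁ → ZMod 2) × (Fin n₂ → ZMod 2)),
      (∀ p ∈ D, p.1 = c) → D.Nonempty → F '' D = D →
      (Prod.snd '' D).Nonempty ∧ (fun y => H c y) '' (Prod.snd '' D) = Prod.snd '' D ∧
      D = Prod.mk c '' (Prod.snd '' D) := by
    intro D hfst hne hinv
    have hDeq : D = Prod.mk c '' (Prod.snd '' D) := by
      ext p
      constructor
      · intro hp
        exact ⟨p.2, Set.mem_image_of_mem _ hp, by rw [← hfst p hp]⟩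
      · rintro ⟨y, ⟨q, hq, rfl⟩, rfl⟩
        have := hfst q hq
        rwa [← this, Prod.mk.eta]
    refine ⟨hne.image _, ?_, hDeq⟩
    ext y
    constructor
    · rintro ⟨z, ⟨q, hq, rfl⟩, rfl⟩
      have hq1 := hfst q hq
      have : F q ∈ D := by rw [← hinv]; exact Set.mem_image_of_mem F hq
      have hFq : F q = (c, H c q.2) := by
        conv_lhs => rw [← Prod.mk.eta (p := q), hq1, hF, hc]
      exact ⟨F q, this, by rw [hFq]⟩
    · rintro ⟨q, hq, rfl⟩
      rw [← hinv] at hq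
      obtain ⟨p, hp, rfl⟩ := hq
      have hp1 := hfst p hp
      have hFp : F p = (c, H c p.2) := by
        conv_lhs => rw [← Prod.mk.eta (p := p), hp1, hF, hc]
      exact ⟨p.2, Set.mem_image_of_mem _ hp, by rw [hFp]⟩
  -- A is invariant
  have hAinv : F '' A = A := by
    ext p
    constructor
    · rintro ⟨q, ⟨i, rfl⟩, rfl⟩
      exact ⟨i + 1, (hstep i).symm⟩
    · rintro ⟨i, rfl⟩
      exact ⟨(c, d (i - 1)), ⟨i - 1, rfl⟩, by rw [hstep, sub_add_cancel]⟩
  have hAne : A.Nonempty := ⟨(c, d 0), 0, rfl⟩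
  have hAfst : ∀ p ∈ A, p.1 = c := by rintro p ⟨i, rfl⟩; rfl
  -- A is an attractor
  have hAatt : IsAttractor F A := by
    refine ⟨hAne, hAinv, ?_⟩
    intro D hDA hDne hDinv
    obtain ⟨h1, h2, h3⟩ := key D (fun p hp => hAfst p (hDA hp)) hDne hDinv
    have hsub : Prod.snd '' D ⊆ Set.range d := by
      rintro y ⟨q, hq, rfl⟩
      obtain ⟨i, hi⟩ := hDA hq
      exact ⟨i, congrArg Prod.snd hi⟩
    have := hd_att.2.2 (Prod.snd '' D) hsub h1 h2
    rw [h3, this, ← hA']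
  refine ⟨hstep, hAatt, ?_⟩
  -- uniqueness
  intro C hC
  obtain ⟨hCne, hCinv, hCmin⟩ := hC
  -- first coordinate projection is F₁-invariant
  have hfstF : ∀ p, (F p).1 = F₁ p.1 := by
    intro p; rw [← Prod.mk.eta (p := p), hF]
  have hC1inv : F₁ '' (Prod.fst '' C) = Prod.fst '' C := by
    conv_rhs => rw [← hCinv]
    ext x
    constructor
    · rintro ⟨z, ⟨p, hp, rfl⟩, rfl⟩
      exact ⟨F p, Set.mem_image_of_mem F hp, hfstF p⟩
    · rintro ⟨q, ⟨p, hp, rfl⟩, rfl⟩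
      exact ⟨p.1, Set.mem_image_of_mem _ hp, (hfstF p).symm⟩
  obtain ⟨C', hC'sub, hC'att⟩ := exists_attractor_subset F₁ (Prod.fst '' C)
    (hCne.image _) hC1inv
  have hcC1 : c ∈ Prod.fst '' C := by
    have := hc_uniq C' hC'att
    exact hC'sub (this ▸ rfl)
  obtain ⟨p₀, hp₀, hp₀1⟩ := hcC1
  -- the orbit of p₀ stays in {c} × _ and is invariant, hence equals C
  obtain ⟨m, hm, hmx⟩ := exists_pos_iterate_eq F C hCinv p₀ hp₀
  have hmaps : Set.MapsTo F C C := fun a ha => hCinv ▸ Set.mem_image_of_mem F ha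
  have horbfst : ∀ k, (F^[k] p₀).1 = c := by
    intro k
    induction k with
    | zero => exact hp₀1
    | succ k ih =>
      rw [Function.iterate_succ_apply', hfstF, ih, hc]
  set D : Set ((Fin n₁ → ZMod 2) × (Fin n₂ → ZMod 2)) := Set.range fun k : ℕ => F^[k] p₀
    with hD
  have hDC : D ⊆ C := by rintro p ⟨k, rfl⟩; exact hmaps.iterate k hp₀
  have hDinv : F '' D = D := by
    ext p
    constructor
    · rintro ⟨q, ⟨k, rfl⟩, rfl⟩
      refine ⟨k + 1, ?_⟩
      show F^[k + 1] p₀ = F (F^[k] p₀)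
      exact Function.iterate_succ_apply' F k p₀
    · rintro ⟨k, rfl⟩
      refine ⟨F^[k + m - 1] p₀, ⟨k + m - 1, rfl⟩, ?_⟩
      show F (F^[k + m - 1] p₀) = F^[k] p₀
      have h := Function.iterate_succ_apply' F (k + m - 1) p₀
      rw [← h]
      have h2 : (k + m - 1).succ = k + m := by omega
      rw [h2, Function.iterate_add_apply, hmx]
  have hDC' : D = C := hCmin D hDC ⟨p₀, 0, rfl⟩ hDinv
  have hCfst : ∀ p ∈ C, p.1 = c := by
    rw [← hDC']; rintro p ⟨k, rfl⟩; exact horbfst k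
  obtain ⟨h1, h2, h3⟩ := key C hCfst hCne hCinv
  -- the snd-projection of C is an attractor of H c
  have hC2att : IsAttractor (fun y => H c y) (Prod.snd '' C) := by
    refine ⟨h1, h2, ?_⟩
    intro D₂ hD₂sub hD₂ne hD₂inv
    have hD₂C : Prod.mk c '' D₂ ⊆ C := by
      rw [h3]; exact Set.image_mono hD₂sub
    have hD₂inv' : F '' (Prod.mk c '' D₂) = Prod.mk c '' D₂ := by
      have himg : ∀ y, F (c, y) = (c, H c y) := by intro y; rw [hF, hc]
      ext p
      constructor
      · rintro ⟨q, ⟨y, hy, rfl⟩, rfl⟩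
        rw [himg]
        exact ⟨H c y, hD₂inv ▸ Set.mem_image_of_mem _ hy, rfl⟩
      · rintro ⟨y, hy, rfl⟩
        rw [← hD₂inv] at hy
        obtain ⟨z, hz, rfl⟩ := hy
        exact ⟨(c, z), Set.mem_image_of_mem _ hz, himg z⟩
    have := hCmin (Prod.mk c '' D₂) hD₂C (hD₂ne.image _) hD₂inv'
    calc D₂ = Prod.snd '' (Prod.mk c '' D₂) := by
              rw [Set.image_image]; simp
      _ = Prod.snd '' C := by rw [this]
  have := hd_uniq _ hC2att
  rw [h3, this, ← hA']
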